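/- Let 𝒜 ⊆ ℝ^d, ℬ ⊆ ℝ^k, let f : ℝ^d → ℝ^k and g : ℝ^d → ℝ be measurable. Let 𝒳 be the family of all random vectors X in ℝ^d such that Pr{X ∈ 𝒜} = 1, f(X) is integrable with E[f(X)] ∈ ℬ, and g(X) is integrable. Then sup_{X ∈ 𝒳} E[g(X)] = sup_{Y ∈ 𝒴} E[g(Y)], where 𝒴 is the subfamily of 𝒳 consisting of discrete random vectors with at most k+1 distinct possible values. -/

import Mathlib

open MeasureTheory ProbabilityTheory Set


local notation "⟪" x ", " y "⟫" => @inner ℝ _ _ x y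

lemma euclid_integral_mem_convexHull :
    ∀ (n : ℕ) {Ω : Type} [inst : MeasurableSpace Ω] (μ : Measure Ω) [IsProbabilityMeasure μ]
      (Y : Ω → EuclideanSpace ℝ (Fin n)) (S : Set (EuclideanSpace ℝ (Fin n))),
      Integrable Y μ → Measurable Y → μ {ω | Y ω ∈ S} = 1 →
      (∫ ω, Y ω ∂μ) ∈ convexHull ℝ S := by
  intro n
  induction n using Nat.strong_induction_on with
  | _ n IH =>
  intro Ω inst μ hμ Y S hint hYm hS
  rcases Nat.eq_zero_or_pos n with hn | hn
  · subst hn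
    obtain ⟨ω, hω⟩ := nonempty_of_measure_ne_zero (μ := μ) (by rw [hS]; exact one_ne_zero)
    have : (∫ ω, Y ω ∂μ) = Y ω := Subsingleton.elim _ _
    rw [this]
    exact subset_convexHull ℝ S hω
  set m : EuclideanSpace ℝ (Fin n) := ∫ ω, Y ω ∂μ with hm
  by_cases hc : ∃ v : EuclideanSpace ℝ (Fin n), v ≠ 0 ∧ ∀ᵐ ω ∂μ, ⟪v, Y ω⟫ ≤ ⟪v, m⟫
  · -- concentrate on a hyperplane, reduce dimension
    obtain ⟨v, hv, hvle⟩ := hc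
    have hint' : Integrable (fun ω => ⟪v, Y ω⟫) μ :=
      (innerSL ℝ v).integrable_comp hint
    have hIv : (∫ ω, ⟪v, Y ω⟫ ∂μ) = ⟪v, m⟫ :=
      (innerSL ℝ v).integral_comp_comm hint
    have hzero : (fun ω => ⟪v, m⟫ - ⟪v, Y ω⟫) =ᵐ[μ] 0 := by
      rw [← MeasureTheory.integral_eq_zero_iff_of_nonneg_ae]
      · rw [integral_sub (integrable_const _) hint', hIv, integral_const]
        simp
      · filter_upwards [hvle] with ω h using sub_nonneg.mpr h
      · exact (integrable_const _).sub hint'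
    set W : Submodule ℝ (EuclideanSpace ℝ (Fin n)) := (ℝ ∙ v)ᗮ with hWdef
    have hmemW : ∀ᵐ ω ∂μ, Y ω - m ∈ W := by
      filter_upwards [hzero] with ω h
      rw [hWdef, Submodule.mem_orthogonal_singleton_iff_inner_right]
      have : ⟪v, m⟫ - ⟪v, Y ω⟫ = 0 := h
      rw [inner_sub_right]
      linarith
    have hWlt : Module.finrank ℝ W < n := by
      have hWne : W ≠ ⊤ := by
        intro h
        have hvW : v ∈ W := h ▸ Submodule.mem_top
        rw [hWdef, Submodule.mem_orthogonal_singleton_iff_inner_right] at hvW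
        exact hv (inner_self_eq_zero.mp hvW)
      have h1 := Submodule.finrank_lt hWne
      simpa [finrank_euclideanSpace_fin] using h1
    set r := Module.finrank ℝ W with hr
    set B := stdOrthonormalBasis ℝ W with hB
    set L : EuclideanSpace ℝ (Fin n) →L[ℝ] EuclideanSpace ℝ (Fin r) :=
      (B.repr.toContinuousLinearEquiv : W ≃L[ℝ] EuclideanSpace ℝ (Fin r)).toContinuousLinearMap.comp
        (Submodule.orthogonalProjection W) with hL
    set M : EuclideanSpace ℝ (Fin r) →L[ℝ] EuclideanSpace ℝ (Fin n) :=
      W.subtypeL.comp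
        (B.repr.symm.toContinuousLinearEquiv :
          EuclideanSpace ℝ (Fin r) ≃L[ℝ] W).toContinuousLinearMap with hM
    have hML : ∀ x : EuclideanSpace ℝ (Fin n), x ∈ W → M (L x) = x := by
      intro x hx
      have h1 : Submodule.orthogonalProjection W x = ⟨x, hx⟩ :=
        Subtype.ext (Submodule.starProjection_eq_self_iff.mpr hx)
      simp [hL, hM, h1]
    set Z : Ω → EuclideanSpace ℝ (Fin r) := fun ω => L (Y ω - m) with hZ
    have hsub : Integrable (fun ω => Y ω - m) μ := hint.sub (integrable_const m)
    have hZint : Integrable Z μ := L.integrable_comp hsub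
    have hZI : (∫ ω, Z ω ∂μ) = 0 := by
      rw [hZ]
      rw [L.integral_comp_comm hsub, integral_sub hint (integrable_const m), integral_const]
      simp [← hm]
    set S₁ : Set (EuclideanSpace ℝ (Fin r)) :=
      L '' {x | x + m ∈ S ∧ x ∈ W} with hS₁
    have hZm : Measurable Z := L.continuous.measurable.comp (hYm.sub measurable_const)
    have hZS : μ {ω | Z ω ∈ S₁} = 1 := by
      have hG : μ {ω | Y ω - m ∈ W}ᶜ = 0 := by
        have := ae_iff.mp hmemW
        convert this using 2
        rfl
      have hsub : {ω | Y ω ∈ S} ∩ {ω | Y ω - m ∈ W} ⊆ {ω | Z ω ∈ S₁} := by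
        rintro ω ⟨h1, h2⟩
        exact ⟨Y ω - m, ⟨by simpa using h1, h2⟩, rfl⟩
      refine le_antisymm prob_le_one ?_
      calc (1 : ENNReal) = μ ({ω | Y ω ∈ S} ∩ {ω | Y ω - m ∈ W}) := by
            rw [measure_inter_conull hG, hS]
        _ ≤ μ {ω | Z ω ∈ S₁} := measure_mono hsub
    have h0 : (0 : EuclideanSpace ℝ (Fin r)) ∈ convexHull ℝ S₁ := by
      rw [← hZI]
      exact IH r hWlt μ Z S₁ hZint hZm hZS
    have himg : M '' (convexHull ℝ S₁) = convexHull ℝ (M '' S₁) :=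
      (M : EuclideanSpace ℝ (Fin r) →ₗ[ℝ] EuclideanSpace ℝ (Fin n)).image_convexHull S₁
    have hMS₁ : M '' S₁ ⊆ (fun x => x - m) '' S := by
      rintro u ⟨z, ⟨x, ⟨hxS, hxW⟩, rfl⟩, rfl⟩
      exact ⟨x + m, hxS, by rw [hML x hxW]; ring_nf; abel⟩
    have h0' : (0 : EuclideanSpace ℝ (Fin n)) ∈ convexHull ℝ ((fun x => x - m) '' S) := by
      have : M 0 ∈ convexHull ℝ (M '' S₁) := himg ▸ Set.mem_image_of_mem M h0
      rw [map_zero] at this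
      exact convexHull_mono hMS₁ this
    have htrans : convexHull ℝ ((fun x => x - m) '' S)
        = (fun x => x - m) '' (convexHull ℝ S) := by
      rw [← Set.sub_singleton, ← Set.sub_singleton, convexHull_sub, convexHull_singleton]
    rw [htrans] at h0'
    obtain ⟨a, haS, ha⟩ := h0'
    have : a = m := by
      have := sub_eq_zero.mp ha
      exact this
    rwa [this] at haS
  · -- compactness argument
    push_neg at hc
    have key : ∀ v : EuclideanSpace ℝ (Fin n), v ≠ 0 → ∃ s ∈ S, ⟪v, m⟫ < ⟪v, s⟫ := by
      intro v hv
      by_contra h'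
      push_neg at h'
      apply hc v hv
      have hsub : {ω | Y ω ∈ S} ⊆ {ω | ⟪v, Y ω⟫ ≤ ⟪v, m⟫} := fun ω h => h' _ h
      have hMmeas : MeasurableSet {ω | ⟪v, Y ω⟫ ≤ ⟪v, m⟫} :=
        measurableSet_le ((innerSL ℝ v).continuous.measurable.comp hYm) measurable_const
      have h1 : μ {ω | ⟪v, Y ω⟫ ≤ ⟪v, m⟫} = 1 :=
        le_antisymm prob_le_one (hS ▸ measure_mono hsub)
      rw [ae_iff]
      refine Eq.trans (congrArg μ ?_) ((prob_compl_eq_zero_iff hMmeas).mpr h1)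
      ext ω; simp
    set U : EuclideanSpace ℝ (Fin n) → Set (EuclideanSpace ℝ (Fin n)) :=
      fun s => {w | ⟪w, m⟫ < ⟪w, s⟫} with hU
    have hUopen : ∀ s ∈ S, IsOpen (U s) := fun s _ =>
      isOpen_lt (Continuous.inner continuous_id continuous_const)
        (Continuous.inner continuous_id continuous_const)
    have hcover : Metric.sphere (0 : EuclideanSpace ℝ (Fin n)) 1 ⊆ ⋃ s ∈ S, U s := by
      intro w hw
      have hwne : w ≠ 0 := by
        intro h
        simp [h] at hw
      obtain ⟨s, hsS, hs⟩ := key w hwne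
      exact Set.mem_biUnion hsS hs
    obtain ⟨T, hTS, hTfin, hTcover⟩ :=
      (isCompact_sphere (0 : EuclideanSpace ℝ (Fin n)) 1).elim_finite_subcover_image
        hUopen hcover
    have hmem : m ∈ convexHull ℝ T := by
      by_contra hmm
      obtain ⟨φ, u, hφm, hφT⟩ :=
        geometric_hahn_banach_point_closed (convex_convexHull ℝ T)
          (hTfin.isCompact_convexHull ℝ).isClosed hmm
      set w : EuclideanSpace ℝ (Fin n) := (InnerProductSpace.toDual ℝ _).symm φ with hw
      have hwapp : ∀ x : EuclideanSpace ℝ (Fin n), ⟪w, x⟫ = φ x := fun x =>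
        InnerProductSpace.toDual_symm_apply
      have hsph : (Metric.sphere (0 : EuclideanSpace ℝ (Fin n)) 1).Nonempty := by
        refine ⟨EuclideanSpace.single ⟨0, hn⟩ (1:ℝ), ?_⟩
        simp [EuclideanSpace.norm_single]
      have hTne : T.Nonempty := by
        obtain ⟨x, hx⟩ := hsph
        obtain ⟨s, hsT, -⟩ := Set.mem_iUnion₂.mp (hTcover hx)
        exact ⟨s, hsT⟩
      have hwne : w ≠ 0 := by
        intro h
        obtain ⟨t, htT⟩ := hTne
        have h1 := hφT t (subset_convexHull ℝ T htT)
        have h2 : φ t = 0 := by rw [← hwapp, h]; simp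
        have h3 : φ m = 0 := by rw [← hwapp, h]; simp
        rw [h2] at h1; rw [h3] at hφm; linarith
      have hnorm : (0:ℝ) < ‖w‖ := norm_pos_iff.mpr hwne
      set w' : EuclideanSpace ℝ (Fin n) := (‖w‖)⁻¹ • (-w) with hw'
      have hw'mem : w' ∈ Metric.sphere (0 : EuclideanSpace ℝ (Fin n)) 1 := by
        simp only [mem_sphere_iff_norm, sub_zero, hw', norm_smul, norm_neg, norm_inv,
          norm_norm]
        rw [inv_mul_cancel₀ (ne_of_gt hnorm)]
      obtain ⟨s, hsT, hs⟩ := Set.mem_iUnion₂.mp (hTcover hw'mem)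
      have hs' : ⟪w', m⟫ < ⟪w', s⟫ := hs
      have hφs := hφT s (subset_convexHull ℝ T hsT)
      rw [hw', real_inner_smul_left, real_inner_smul_left, inner_neg_left, inner_neg_left,
        hwapp, hwapp] at hs'
      have : φ s < φ m := by
        have h2 := mul_lt_mul_of_pos_left hs' hnorm
        rw [← mul_assoc, ← mul_assoc, mul_inv_cancel₀ (ne_of_gt hnorm)] at h2
        simpa using h2
      linarith
    exact convexHull_mono hTS hmem

lemma integral_mem_convexHull' {E : Type} [NormedAddCommGroup E] [NormedSpace ℝ E]
    [FiniteDimensional ℝ E] [MeasurableSpace E] [BorelSpace E]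
    {Ω : Type} [MeasurableSpace Ω] (μ : Measure Ω) [IsProbabilityMeasure μ]
    {Y : Ω → E} {S : Set E} (hint : Integrable Y μ) (hYm : Measurable Y)
    (hS : μ {ω | Y ω ∈ S} = 1) :
    (∫ ω, Y ω ∂μ) ∈ convexHull ℝ S := by
  set e : E ≃L[ℝ] EuclideanSpace ℝ (Fin (Module.finrank ℝ E)) := toEuclidean with he
  have hint' : Integrable (fun ω => e (Y ω)) μ :=
    (e.toContinuousLinearMap).integrable_comp hint
  have hS' : μ {ω | e (Y ω) ∈ e '' S} = 1 := by
    have : {ω | e (Y ω) ∈ e '' S} = {ω | Y ω ∈ S} := by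
      ext ω
      constructor
      · rintro ⟨a, ha, hea⟩
        show Y ω ∈ S
        rwa [← e.injective hea]
      · intro h
        exact Set.mem_image_of_mem e h
    rw [this, hS]
  have hYm' : Measurable fun ω => e (Y ω) := e.continuous.measurable.comp hYm
  have h1 := euclid_integral_mem_convexHull (Module.finrank ℝ E) μ
    (fun ω => e (Y ω)) (e '' S) hint' hYm' hS'
  have h2 : (∫ ω, e (Y ω) ∂μ) = e (∫ ω, Y ω ∂μ) := e.integral_comp_comm Y
  rw [h2] at h1
  have h3 : convexHull ℝ (e '' S) = e '' convexHull ℝ S :=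
    ((e.toLinearEquiv.toLinearMap).image_convexHull S).symm
  rw [h3] at h1
  obtain ⟨a, ha, hea⟩ := h1
  rwa [← e.injective hea]

lemma caratheodory_slice {k : ℕ} {Φ : Set ((Fin k → ℝ) × ℝ)} {p : (Fin k → ℝ) × ℝ}
    (hp : p ∈ convexHull ℝ Φ) :
    ∃ (w : Fin (k+1) → ℝ) (q : Fin (k+1) → (Fin k → ℝ) × ℝ),
      (∀ i, 0 ≤ w i) ∧ (∀ i, q i ∈ Φ) ∧ (∑ i, w i) = 1 ∧
      (∑ i, w i • q i).1 = p.1 ∧ p.2 ≤ (∑ i, w i • q i).2 := by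
  classical
  have hrank : Module.finrank ℝ ((Fin k → ℝ) × ℝ) = k + 1 := by
    simp [Module.finrank_prod]
  -- first Caratheodory: a finite subset T of Φ with p in its hull
  obtain ⟨ι₀, ft₀, z₀, w₀, hz₀, hai₀, hw₀pos, hw₀sum, hw₀eq⟩ :=
    eq_pos_convex_span_of_mem_convexHull hp
  set T : Finset ((Fin k → ℝ) × ℝ) := Finset.univ.image z₀ with hT
  have hTΦ : (T : Set ((Fin k → ℝ) × ℝ)) ⊆ Φ := by
    intro x hx
    simp only [hT, Finset.coe_image, Finset.coe_univ, Set.image_univ] at hx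
    exact hz₀ hx
  have hzT : ∀ i, z₀ i ∈ (T : Set ((Fin k → ℝ) × ℝ)) := by
    intro i
    simp [hT]
  have hpT : p ∈ convexHull ℝ (T : Set ((Fin k → ℝ) × ℝ)) := by
    rw [← hw₀eq]
    exact Convex.sum_mem (convex_convexHull ℝ _) (fun i _ => (hw₀pos i).le)
      hw₀sum (fun i _ => subset_convexHull ℝ _ (hzT i))
  -- compact slice and its max
  set K : Set ((Fin k → ℝ) × ℝ) :=
    convexHull ℝ (T : Set ((Fin k → ℝ) × ℝ)) ∩ {q | q.1 = p.1} with hK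
  have hKcpt : IsCompact K :=
    (T.finite_toSet.isCompact_convexHull ℝ).inter_right
      (isClosed_eq continuous_fst continuous_const)
  have hpK : p ∈ K := ⟨hpT, rfl⟩
  obtain ⟨p', hp'K, hmax⟩ := hKcpt.exists_isMaxOn ⟨p, hpK⟩ continuous_snd.continuousOn
  -- second Caratheodory at the maximum point
  obtain ⟨ι, ft, z, w, hz, hai, hwpos, hwsum, hweq⟩ :=
    eq_pos_convex_span_of_mem_convexHull hp'K.1
  have hne : Nonempty ι := by
    by_contra h
    rw [not_nonempty_iff] at h
    rw [Finset.sum_eq_zero (fun i _ => (h.elim i))] at hwsum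
    norm_num at hwsum
  have hcard : Fintype.card ι ≤ k + 1 := by
    by_contra hcd
    push_neg at hcd
    have hcard2 : Fintype.card ι = k + 2 := by
      have h1 := hai.card_le_finrank_succ
      have h2 := Submodule.finrank_le (vectorSpan ℝ (Set.range z))
      rw [hrank] at h2
      omega
    -- the affine span is everything; walk upward in the last coordinate
    have htop : affineSpan ℝ (Set.range z) = ⊤ :=
      hai.affineSpan_eq_top_iff_card_eq_finrank_add_one.mpr (by omega)
    have hmem2 : p' + ((0 : Fin k → ℝ), (1:ℝ)) ∈ affineSpan ℝ (Set.range z) := by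
      rw [htop]; trivial
    obtain ⟨u, husum, hueq⟩ := eq_affineCombination_of_mem_affineSpan_of_fintype hmem2
    rw [Finset.univ.affineCombination_eq_linear_combination z u husum] at hueq
    set c : ι → ℝ := fun i => u i - w i with hc
    have hcsum : (∑ i, c i) = 0 := by
      simp [hc, Finset.sum_sub_distrib, husum, hwsum]
    have hczsum : (∑ i, c i • z i) = ((0 : Fin k → ℝ), (1:ℝ)) := by
      simp only [hc, sub_smul, Finset.sum_sub_distrib, ← hueq, hweq]
      abel
    have hι : (Finset.univ : Finset ι).Nonempty := Finset.univ_nonempty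
    set δ : ℝ := Finset.univ.inf' hι w with hδ
    have hδpos : 0 < δ := by
      rw [hδ, Finset.lt_inf'_iff]
      exact fun i _ => hwpos i
    set Mx : ℝ := Finset.univ.sup' hι (fun i => |c i|) with hMx
    have hMx0 : 0 ≤ Mx := by
      obtain ⟨i⟩ := hne
      exact le_trans (abs_nonneg (c i)) (Finset.le_sup' (fun i => |c i|) (Finset.mem_univ i))
    set ε : ℝ := δ / (Mx + 1) with hε
    have hεpos : 0 < ε := div_pos hδpos (by linarith)
    set w' : ι → ℝ := fun i => w i + ε * c i with hw'
    have hw'pos : ∀ i, 0 ≤ w' i := by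
      intro i
      have h1 : δ ≤ w i := Finset.inf'_le _ (Finset.mem_univ i)
      have h2 : |c i| ≤ Mx := Finset.le_sup' (fun i => |c i|) (Finset.mem_univ i)
      have h3 : -(ε * Mx) ≤ ε * c i := by
        have := neg_abs_le (c i)
        nlinarith
      have h4 : ε * Mx < δ := by
        rw [hε, div_mul_eq_mul_div, div_lt_iff₀ (by linarith)]
        nlinarith
      simp only [hw']
      nlinarith
    have hw'sum : (∑ i, w' i) = 1 := by
      simp [hw', Finset.sum_add_distrib, hwsum, ← Finset.mul_sum, hcsum]
    have hw'eq : (∑ i, w' i • z i) = p' + ε • ((0 : Fin k → ℝ), (1:ℝ)) := by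
      simp only [hw', add_smul, Finset.sum_add_distrib, hweq, mul_smul,
        ← Finset.smul_sum, hczsum]
    have hq'K : (p' + ε • ((0 : Fin k → ℝ), (1:ℝ))) ∈ K := by
      constructor
      · rw [← hw'eq]
        exact Convex.sum_mem (convex_convexHull ℝ _) (fun i _ => hw'pos i)
          hw'sum (fun i _ => subset_convexHull ℝ _ (hz (Set.mem_range_self i)))
      · show (p' + ε • ((0 : Fin k → ℝ), (1:ℝ))).1 = p.1
        simp only [Prod.fst_add, Prod.smul_fst]
        rw [hp'K.2]
        simp
    have h5 : (p' + ε • ((0 : Fin k → ℝ), (1:ℝ))).2 ≤ p'.2 := hmax hq'K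
    simp only [Prod.snd_add, Prod.smul_snd, smul_eq_mul, mul_one] at h5
    linarith
  -- reindex into Fin (k+1)
  obtain ⟨i₀⟩ := hne
  have hq₀ : z i₀ ∈ Φ := hTΦ (hz (Set.mem_range_self i₀))
  set j : ι → Fin (k + 1) := fun i => Fin.castLE hcard ((Fintype.equivFin ι) i) with hj
  have hjinj : Function.Injective j := by
    intro a b hab
    exact (Fintype.equivFin ι).injective (Fin.castLE_injective hcard hab)
  set W : Fin (k+1) → ℝ := fun ℓ => ∑ i, if j i = ℓ then w i else 0 with hWd
  set Q : Fin (k+1) → (Fin k → ℝ) × ℝ :=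
    fun ℓ => if h : ∃ i, j i = ℓ then z h.choose else z i₀ with hQd
  have hQj : ∀ i, Q (j i) = z i := by
    intro i
    have h : ∃ i', j i' = j i := ⟨i, rfl⟩
    have := h.choose_spec
    simp only [hQd, dif_pos h]
    rw [hjinj this]
  refine ⟨W, Q, ?_, ?_, ?_, ?_, ?_⟩
  · intro ℓ
    exact Finset.sum_nonneg fun i _ => by by_cases h : j i = ℓ <;> simp [h, (hwpos i).le]
  · intro ℓ
    by_cases h : ∃ i, j i = ℓ
    · simp only [hQd, dif_pos h]
      exact hTΦ (hz (Set.mem_range_self _))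
    · simp only [hQd, dif_neg h]
      exact hq₀
  · rw [hWd]
    rw [Finset.sum_comm]
    rw [show (1:ℝ) = ∑ i : ι, w i from hwsum.symm]
    refine Finset.sum_congr rfl fun i _ => ?_
    simp [Finset.sum_ite_eq]
  · have hkey : (∑ ℓ, W ℓ • Q ℓ) = p' := by
      rw [hWd, ← hweq]
      simp only [Finset.sum_smul, ite_smul, zero_smul]
      rw [Finset.sum_comm]
      refine Finset.sum_congr rfl fun i _ => ?_
      rw [Finset.sum_ite_eq]
      simp [hQj i]
    rw [hkey, hp'K.2]
  · have hkey : (∑ ℓ, W ℓ • Q ℓ) = p' := by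
      rw [hWd, ← hweq]
      simp only [Finset.sum_smul, ite_smul, zero_smul]
      rw [Finset.sum_comm]
      refine Finset.sum_congr rfl fun i _ => ?_
      rw [Finset.sum_ite_eq]
      simp [hQj i]
    rw [hkey]
    exact hmax hpK

/-- The supremum of `E[g(X)]` over all random vectors `X` with `Pr{X ∈ A} = 1` and
`E[f(X)] ∈ B` equals the supremum over discrete random vectors with at most `k+1`
distinct possible values, i.e. over convex combinations of at most `k+1` points of `A`
whose `f`-barycenter lies in `B`. -/
theorem statement2 {d k : ℕ}
    (A : Set (Fin d → ℝ)) (B : Set (Fin k → ℝ))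
    (f : (Fin d → ℝ) → (Fin k → ℝ)) (g : (Fin d → ℝ) → ℝ)
    (hf : Measurable f) (hg : Measurable g) :
    sSup { v : ℝ | ∃ (Ω : Type) (_ : MeasurableSpace Ω) (μ : Measure Ω),
        IsProbabilityMeasure μ ∧ ∃ X : Ω → (Fin d → ℝ), Measurable X ∧
        μ {ω | X ω ∈ A} = 1 ∧ Integrable (fun ω => f (X ω)) μ ∧
        (∫ ω, f (X ω) ∂μ) ∈ B ∧ Integrable (fun ω => g (X ω)) μ ∧
        v = ∫ ω, g (X ω) ∂μ }
    = sSup { v : ℝ |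
      ∃ (θ : Fin (k + 1) → ℝ) (y : Fin (k + 1) → (Fin d → ℝ)),
        (∀ ℓ, 0 ≤ θ ℓ) ∧ (∀ ℓ, y ℓ ∈ A) ∧ (∑ ℓ, θ ℓ) = 1 ∧
        (∑ ℓ, θ ℓ • f (y ℓ)) ∈ B ∧ v = ∑ ℓ, θ ℓ * g (y ℓ) } := by
  classical
  apply csSup_eq_csSup_of_forall_exists_le
  · -- any random vector is dominated by a discrete one
    rintro v ⟨Ω, mΩ, μ, hμ, X, hX, hXA, hfint, hfB, hgint, rfl⟩
    set Y : Ω → (Fin k → ℝ) × ℝ := fun ω => (f (X ω), g (X ω)) with hY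
    have hYm : Measurable Y := (hf.comp hX).prodMk (hg.comp hX)
    have hYint : Integrable Y μ := hfint.prodMk hgint
    set Φ : Set ((Fin k → ℝ) × ℝ) := (fun x => (f x, g x)) '' A with hΦ
    have hYS : μ {ω | Y ω ∈ Φ} = 1 :=
      le_antisymm prob_le_one (hXA ▸ measure_mono (fun ω h => ⟨X ω, h, rfl⟩))
    have hmem := integral_mem_convexHull' μ hYint hYm hYS
    have hI : (∫ ω, Y ω ∂μ) = (∫ ω, f (X ω) ∂μ, ∫ ω, g (X ω) ∂μ) :=
      integral_pair hfint hgint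
    rw [hI] at hmem
    obtain ⟨w, q, hw0, hqΦ, hwsum, hfst, hsnd⟩ := caratheodory_slice hmem
    choose x hxA hxq using hqΦ
    have hq1 : ∀ i, (q i).1 = f (x i) := fun i => by rw [← hxq i]
    have hq2 : ∀ i, (q i).2 = g (x i) := fun i => by rw [← hxq i]
    refine ⟨∑ i, w i * g (x i), ⟨w, x, hw0, hxA, hwsum, ?_, rfl⟩, ?_⟩
    · have h1 : (∑ i, w i • q i).1 = ∑ i, w i • f (x i) := by
        rw [Prod.fst_sum]
        exact Finset.sum_congr rfl fun i _ => by rw [Prod.smul_fst, hq1]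
      rw [← h1, hfst]
      exact hfB
    · have h2 : (∑ i, w i • q i).2 = ∑ i, w i * g (x i) := by
        rw [Prod.snd_sum]
        exact Finset.sum_congr rfl fun i _ => by rw [Prod.smul_snd, hq2, smul_eq_mul]
      rw [← h2]
      exact hsnd
  · -- a discrete vector is a random vector
    rintro v ⟨θ, y, hθ0, hyA, hθsum, hfB, rfl⟩
    refine ⟨∑ ℓ, θ ℓ * g (y ℓ), ?_, le_refl _⟩
    set μ0 : Measure (Fin (k+1)) :=
      ∑ ℓ : Fin (k+1), (ENNReal.ofReal (θ ℓ)) • Measure.dirac ℓ with hμ0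
    have hμ0prob : IsProbabilityMeasure μ0 := by
      constructor
      rw [hμ0, Measure.finset_sum_apply]
      simp only [Measure.smul_apply, Measure.dirac_apply_of_mem (Set.mem_univ _),
        smul_eq_mul, mul_one]
      rw [← ENNReal.ofReal_sum_of_nonneg (fun i _ => hθ0 i), hθsum, ENNReal.ofReal_one]
    haveI := hμ0prob
    have hInt : ∀ {F : Type} [NormedAddCommGroup F] (h : Fin (k+1) → F),
        Integrable h μ0 := fun h => Integrable.of_finite
    have hI : ∀ {F : Type} [NormedAddCommGroup F] [NormedSpace ℝ F] [CompleteSpace F]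
        (h : Fin (k+1) → F), (∫ ℓ, h ℓ ∂μ0) = ∑ ℓ, θ ℓ • h ℓ := by
      intro F _ _ _ h
      rw [hμ0, integral_finset_sum_measure
        (fun i _ => (Integrable.of_finite).smul_measure ENNReal.ofReal_ne_top)]
      refine Finset.sum_congr rfl fun i _ => ?_
      rw [integral_smul_measure, integral_dirac, ENNReal.toReal_ofReal (hθ0 i)]
    refine ⟨Fin (k+1), inferInstance, μ0, hμ0prob, y, measurable_of_countable y, ?_, ?_, ?_, ?_, ?_⟩
    · have : {ω | y ω ∈ A} = Set.univ := Set.eq_univ_of_forall hyA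
      rw [this, measure_univ]
    · exact hInt _
    · rw [hI (fun ℓ => f (y ℓ))]
      exact hfB
    · exact hInt _
    · rw [hI (fun ℓ => g (y ℓ))]
      simp [smul_eq_mul]
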